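/- arXiv:2005.06183 — 6 statements merged into one kernel-verified Lean document; each statement's English description precedes it below -/
import Mathlib

section
/- Let G be a countable group with a left-invariant linear order, and let Ψ : G → ℚ ∩ J be an order-preserving bijection onto the rationals of an interval J. Define, for each g ∈ G, a map ρ(g) on ℚ ∩ J by ρ(g)(Ψ(h)) = Ψ(gh). Then ρ is an injective group homomorphism from G into the group of order-preserving bijections of ℚ ∩ J. -/
theorem stmt5 {G : Type*} [Group G] [Countable G] [LinearOrder G]
    (hleft : ∀ f g h : G, g < h → f * g < f * h)
    (J : Set ℚ) (Ψ : G ≃ J) (hΨ : ∀ a b : G, a < b ↔ (Ψ a : ℚ) < (Ψ b : ℚ))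
    (ρ : G → J → J) (hρ : ∀ g h : G, ρ g (Ψ h) = Ψ (g * h)) :
    (∀ g : G, Function.Bijective (ρ g)) ∧
    (∀ g : G, StrictMono (ρ g)) ∧
    (∀ g g' : G, ∀ x : J, ρ (g * g') x = ρ g (ρ g' x)) ∧
    Function.Injective ρ := by
  have key : ∀ (g : G) (x : J), ρ g x = Ψ (g * Ψ.symm x) := by
    intro g x
    have := hρ g (Ψ.symm x)
    rwa [Ψ.apply_symm_apply] at this
  refine ⟨?_, ?_, ?_, ?_⟩
  · intro g
    constructor
    · intro x y hxy
      rw [key, key] at hxy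
      have := Ψ.injective hxy
      have := mul_left_cancel this
      exact Ψ.symm.injective this
    · intro y
      refine ⟨Ψ (g⁻¹ * Ψ.symm y), ?_⟩
      rw [hρ, mul_inv_cancel_left, Ψ.apply_symm_apply]
  · intro g x y hxy
    rw [key, key]
    have hlt : Ψ.symm x < Ψ.symm y := by
      by_contra hle
      push_neg at hle
      rcases lt_or_eq_of_le hle with h | h
      · have := (hΨ _ _).mp h
        rw [Ψ.apply_symm_apply, Ψ.apply_symm_apply] at this
        exact absurd hxy (not_lt_of_gt (Subtype.coe_lt_coe.mp this))
      · have : x = y := by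
          have := congrArg Ψ h
          rw [Ψ.apply_symm_apply, Ψ.apply_symm_apply] at this
          exact this.symm
        exact absurd hxy (this ▸ lt_irrefl _)
    have := (hΨ _ _).mp (hleft g _ _ hlt)
    exact Subtype.coe_lt_coe.mp this
  · intro g g' x
    rw [key, key, key, Ψ.symm_apply_apply, mul_assoc]
  · intro g g' hgg'
    have := congrFun hgg' (Ψ 1)
    rw [hρ, hρ, mul_one, mul_one] at this
    exact Ψ.injective this
end

section
/- Let H be a group acting faithfully on a set Y, let N be a normal subgroup of H, and suppose there exist a nontrivial g ∈ N and a nonempty subset U ⊆ Y with g(U) ∩ U = ∅. Then the commutator subgroup of the rigid stabilizer of U is contained in N. -/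
/-- The rigid stabilizer of a subset `U` of `Y`: the subgroup of elements
moving only points of `U`. -/
def rigidStabilizer (H : Type*) {Y : Type*} [Group H] [MulAction H Y]
    (U : Set Y) : Subgroup H where
  carrier := {h : H | ∀ y : Y, y ∉ U → h • y = y}
  one_mem' := fun y _ => one_smul H y
  mul_mem' := by
    intro a b ha hb y hy
    rw [mul_smul, hb y hy, ha y hy]
  inv_mem' := by
    intro a ha y hy
    rw [inv_smul_eq_iff, ha y hy]

theorem stmt9 {H Y : Type*} [Group H] [MulAction H Y] [FaithfulSMul H Y]
    (N : Subgroup H) [N.Normal] (g : H) (hg : g ∈ N) (hg1 : g ≠ 1)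
    (U : Set Y) (hU : U.Nonempty) (hgU : ∀ y ∈ U, g • y ∉ U) :
    ⁅rigidStabilizer H U, rigidStabilizer H U⁆ ≤ N := by
  -- elements of the rigid stabilizer map U into U
  have hmap : ∀ h ∈ rigidStabilizer H U, ∀ y ∈ U, h • y ∈ U := by
    intro h hh y hy
    by_contra hcon
    have h1 : h⁻¹ • (h • y) = h • y := (rigidStabilizer H U).inv_mem hh (h • y) hcon
    rw [inv_smul_smul] at h1
    exact hcon (h1 ▸ hy)
  -- if y ∈ U then g⁻¹ • y ∉ U
  have hginv : ∀ y ∈ U, g⁻¹ • y ∉ U := by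
    intro y hy hcon
    have := hgU _ hcon
    rw [smul_inv_smul] at this
    exact this hy
  rw [Subgroup.commutator_le]
  intro a ha b hb
  obtain ⟨c, hc_def⟩ : ∃ c : H, c = g * b⁻¹ * g⁻¹ := ⟨_, rfl⟩
  -- c acts pointwise as: fixes y when g⁻¹ • y ∉ U
  have hc_fix : ∀ y : Y, g⁻¹ • y ∉ U → c • y = y := by
    intro y hy
    have : b⁻¹ • (g⁻¹ • y) = g⁻¹ • y := (rigidStabilizer H U).inv_mem hb _ hy
    rw [hc_def, mul_smul, mul_smul, this, smul_inv_smul]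
  -- a and c commute
  have key : a * c = c * a := by
    apply FaithfulSMul.eq_of_smul_eq_smul (α := Y)
    intro y
    rw [mul_smul, mul_smul]
    by_cases hy : y ∈ U
    · have h1 : c • y = y := hc_fix y (hginv y hy)
      have h2 : c • (a • y) = a • y := hc_fix _ (hginv _ (hmap a ha y hy))
      rw [h1, h2]
    · have ha1 : a • y = y := ha y hy
      rw [ha1]
      by_cases hy2 : g⁻¹ • y ∈ U
      · -- c • y = g • (b⁻¹ • (g⁻¹ • y)) which lies outside U, so a fixes it
        have hbu : b⁻¹ • (g⁻¹ • y) ∈ U := hmap b⁻¹ ((rigidStabilizer H U).inv_mem hb) _ hy2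
        have hcy : c • y = g • (b⁻¹ • (g⁻¹ • y)) := by
          rw [hc_def, mul_smul, mul_smul]
        have hout : c • y ∉ U := by rw [hcy]; exact hgU _ hbu
        rw [ha _ hout]
      · rw [hc_fix y hy2]; exact ha1
  -- b * c = ⁅b, g⁆ ∈ N
  have hbc : b * c ∈ N := by
    have h1 : b * g * b⁻¹ ∈ N := Subgroup.Normal.conj_mem ‹N.Normal› g hg b
    have h2 : (b * g * b⁻¹) * g⁻¹ ∈ N := N.mul_mem h1 (N.inv_mem hg)
    have : b * c = (b * g * b⁻¹) * g⁻¹ := by rw [hc_def]; group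
    rw [this]
    exact h2
  -- ⁅a, b⁆ = a * (b*c) * a⁻¹ * (b*c)⁻¹
  have hca : c * a⁻¹ * c⁻¹ = a⁻¹ := by
    have h' : a⁻¹ * c = c * a⁻¹ := by
      have := congrArg (fun x => a⁻¹ * x * a⁻¹) key
      simpa [mul_assoc] using this.symm
    rw [← h', mul_assoc, mul_inv_cancel, mul_one]
  open scoped commutatorElement in
  have heq : ⁅a, b⁆ = a * (b * c) * a⁻¹ * (b * c)⁻¹ := by
    have step : a * (b * c) * a⁻¹ * (b * c)⁻¹ = a * b * (c * a⁻¹ * c⁻¹) * b⁻¹ := by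
      group
    rw [step, hca, commutatorElement_def]
  rw [heq]
  exact N.mul_mem (Subgroup.Normal.conj_mem ‹N.Normal› _ hbc a) (N.inv_mem hbc)
end

section
/- Let G and T be groups, let T act on ℝ, and let W = C₀(ℝ, G) ⋊ T be the permutational wreath product, where C₀(ℝ, G) is the group of finitely/boundedly supported functions ℝ → G with pointwise multiplication and T acts by (σ(f)h)(s) = h(f⁻¹ s). For g ∈ G let ḡ ∈ C₀(ℝ, G) be the function taking value g on [1/2, 1) and 1 elsewhere. Suppose T contains elements f₁, f₂ with f₁([1/2,1)) = [1/4,1) and f₂([1/2,1)) = [1/4,1/2). Then for every g ∈ G, the element ḡ satisfies ḡ = (f₁ ḡ f₁⁻¹)(f₂ ḡ f₂⁻¹)⁻¹; in particular ḡ lies in the commutator subgroup of the subgroup generated by {ḡ : g ∈ G} and T. -/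
/-- The automorphism of the function group `ℝ → G` induced by `f : T`. -/
noncomputable def wreathAut {G T : Type*} [Group G] [Group T] [MulAction T ℝ] (f : T) :
    MulAut (ℝ → G) where
  toFun h := fun s => h (f⁻¹ • s)
  invFun h := fun s => h (f • s)
  left_inv h := by funext s; simp
  right_inv h := by funext s; simp
  map_mul' h₁ h₂ := rfl

/-- The action of `T` on `ℝ → G` as a homomorphism to automorphisms. -/
noncomputable def wreathAct (G T : Type*) [Group G] [Group T] [MulAction T ℝ] :
    T →* MulAut (ℝ → G) where
  toFun := wreathAut
  map_one' := by
    ext h s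
    simp [wreathAut]
  map_mul' f₁ f₂ := by
    ext h s
    simp [wreathAut, mul_smul]

/-- The function taking value `g` on `[1/2, 1)` and `1` elsewhere. -/
noncomputable def gbar {G : Type*} [Group G] (g : G) : ℝ → G :=
  fun s => if s ∈ Set.Ico (1/2 : ℝ) 1 then g else 1

lemma mem_smul_image_iff {T : Type*} [Group T] [MulAction T ℝ] (f : T) (S : Set ℝ) (s : ℝ) :
    s ∈ (fun x => f • x) '' S ↔ f⁻¹ • s ∈ S := by
  constructor
  · rintro ⟨x, hx, rfl⟩; simpa
  · intro h; exact ⟨f⁻¹ • s, h, by simp⟩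

open SemidirectProduct in
theorem stmt10 {G T : Type*} [Group G] [Group T] [MulAction T ℝ]
    (f₁ f₂ : T)
    (h₁ : (fun s => f₁ • s) '' Set.Ico (1/2 : ℝ) 1 = Set.Ico (1/4 : ℝ) 1)
    (h₂ : (fun s => f₂ • s) '' Set.Ico (1/2 : ℝ) 1 = Set.Ico (1/4 : ℝ) (1/2))
    (g : G) :
    (inl (gbar g) : (ℝ → G) ⋊[wreathAct G T] T) =
      (inr f₁ * inl (gbar g) * (inr f₁)⁻¹) *
        (inr f₂ * inl (gbar g) * (inr f₂)⁻¹)⁻¹ ∧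
    inl (gbar g) ∈
      ⁅Subgroup.closure
          ((Set.range fun g : G => (inl (gbar g) : (ℝ → G) ⋊[wreathAct G T] T)) ∪
            Set.range inr),
        Subgroup.closure
          ((Set.range fun g : G => (inl (gbar g) : (ℝ → G) ⋊[wreathAct G T] T)) ∪
            Set.range inr)⁆ := by
  classical
  have key : ∀ (f : T) (S : Set ℝ), (fun x => f • x) '' Set.Ico (1/2 : ℝ) 1 = S →
      (wreathAct G T f) (gbar g) = fun s => if s ∈ S then g else 1 := by
    intro f S hS
    funext s
    have h : ((wreathAct G T f) (gbar g)) s = gbar g (f⁻¹ • s) := rfl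
    rw [h, gbar]
    have h' : f⁻¹ • s ∈ Set.Ico (1/2 : ℝ) 1 ↔ s ∈ S := by
      rw [← hS, mem_smul_image_iff]
    simp only [h']
  have e₁ := key f₁ _ h₁
  have e₂ := key f₂ _ h₂
  have main : gbar g = (wreathAct G T f₁) (gbar g) * ((wreathAct G T f₂) (gbar g))⁻¹ := by
    rw [e₁, e₂]
    funext s
    simp only [gbar, Pi.mul_apply, Pi.inv_apply, Set.mem_Ico]
    by_cases hA : (1/2:ℝ) ≤ s ∧ s < 1
    · have hB : (1/4:ℝ) ≤ s ∧ s < 1 := ⟨by linarith [hA.1], hA.2⟩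
      have hC : ¬((1/4:ℝ) ≤ s ∧ s < 1/2) := fun h => by linarith [hA.1, h.2]
      rw [if_pos hA, if_pos hB, if_neg hC, inv_one, mul_one]
    · by_cases hD : (1/4:ℝ) ≤ s ∧ s < 1/2
      · have hB : (1/4:ℝ) ≤ s ∧ s < 1 := ⟨hD.1, by linarith [hD.2]⟩
        rw [if_neg hA, if_pos hB, if_pos hD]; simp
      · have hB : ¬((1/4:ℝ) ≤ s ∧ s < 1) := by
          intro hB
          rcases lt_or_ge s (1/2) with h|h
          · exact hD ⟨hB.1, h⟩
          · exact hA ⟨h, hB.2⟩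
        rw [if_neg hA, if_neg hB, if_neg hD]; simp
  have eq1 : (inl (gbar g) : (ℝ → G) ⋊[wreathAct G T] T) =
      (inr f₁ * inl (gbar g) * (inr f₁)⁻¹) *
        (inr f₂ * inl (gbar g) * (inr f₂)⁻¹)⁻¹ := by
    rw [show ((inr f₁ : (ℝ → G) ⋊[wreathAct G T] T))⁻¹ = inr f₁⁻¹ from (map_inv _ _).symm,
        show ((inr f₂ : (ℝ → G) ⋊[wreathAct G T] T))⁻¹ = inr f₂⁻¹ from (map_inv _ _).symm,
        ← inl_aut, ← inl_aut, ← map_inv, ← map_mul, ← main]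
  refine ⟨eq1, ?_⟩
  set H := Subgroup.closure
      ((Set.range fun g : G => (inl (gbar g) : (ℝ → G) ⋊[wreathAct G T] T)) ∪
        Set.range inr) with hH
  have ha : (inl (gbar g) : (ℝ → G) ⋊[wreathAct G T] T) ∈ H :=
    Subgroup.subset_closure (Or.inl ⟨g, rfl⟩)
  have hx : (inr f₁ : (ℝ → G) ⋊[wreathAct G T] T) ∈ H :=
    Subgroup.subset_closure (Or.inr ⟨f₁, rfl⟩)
  have hy : (inr f₂ : (ℝ → G) ⋊[wreathAct G T] T) ∈ H :=
    Subgroup.subset_closure (Or.inr ⟨f₂, rfl⟩)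
  set a := (inl (gbar g) : (ℝ → G) ⋊[wreathAct G T] T)
  set x := (inr f₁ : (ℝ → G) ⋊[wreathAct G T] T)
  set y := (inr f₂ : (ℝ → G) ⋊[wreathAct G T] T)
  open scoped commutatorElement in
  have hcomm : ⁅x, a⁆ * ⁅a, y⁆ = (x * a * x⁻¹) * (y * a * y⁻¹)⁻¹ := by group
  open scoped commutatorElement in
  rw [show a = ⁅x, a⁆ * ⁅a, y⁆ from by rw [hcomm]; exact eq1]
  exact mul_mem (Subgroup.commutator_mem_commutator hx ha)
    (Subgroup.commutator_mem_commutator ha hy)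
end

section
/- Let S(G) = ⟨Ḡ, T⟩ be the splinter group inside G ≀_ℝ T as above, where T is a simple group acting on ℝ containing elements mapping [1/2,1) onto [1/4,1) and onto [1/4,1/2) respectively. If T is simple (and nontrivial), then S(G) is a perfect group, i.e. equal to its own commutator subgroup. -/
private lemma mem_image_smul_iff' {T : Type*} [Group T] [MulAction T ℝ] (f : T) (s : ℝ)
    (A : Set ℝ) : f⁻¹ • s ∈ A ↔ s ∈ (fun x => f • x) '' A := by
  constructor
  · intro h; exact ⟨f⁻¹ • s, h, by simp⟩
  · rintro ⟨y, hy, rfl⟩; simpa using hy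

private lemma noncomm' {T : Type*} [Group T] [MulAction T ℝ] (f₁ f₂ : T)
    (h₁ : (fun s => f₁ • s) '' Set.Ico (1/2 : ℝ) 1 = Set.Ico (1/4 : ℝ) 1)
    (h₂ : (fun s => f₂ • s) '' Set.Ico (1/2 : ℝ) 1 = Set.Ico (1/4 : ℝ) (1/2)) :
    ¬ Commute f₁ f₂ := by
  intro hc
  set A : Set ℝ := Set.Ico (1/2 : ℝ) 1 with hA
  set B : Set ℝ := Set.Ico (1/4 : ℝ) (1/2) with hB
  have hAB : Set.Ico (1/4 : ℝ) 1 = A ∪ B := by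
    rw [Set.union_comm]
    exact (Set.Ico_union_Ico_eq_Ico (by norm_num) (by norm_num)).symm
  have key : (fun s => f₁ • s) '' B = B ∪ (fun s => f₂ • s) '' B := by
    calc (fun s => f₁ • s) '' B = (fun s => f₁ • s) '' ((fun s => f₂ • s) '' A) := by rw [h₂]
    _ = (fun s => (f₁ * f₂) • s) '' A := by rw [Set.image_image]; simp [mul_smul]
    _ = (fun s => (f₂ * f₁) • s) '' A := by rw [hc.eq]
    _ = (fun s => f₂ • s) '' ((fun s => f₁ • s) '' A) := by rw [Set.image_image]; simp [mul_smul]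
    _ = (fun s => f₂ • s) '' (A ∪ B) := by rw [h₁, hAB]
    _ = (fun s => f₂ • s) '' A ∪ (fun s => f₂ • s) '' B := Set.image_union _ _ _
    _ = B ∪ (fun s => f₂ • s) '' B := by rw [h₂]
  have hBsub : B ⊆ (fun s => f₁ • s) '' B := key ▸ Set.subset_union_left
  have hdisjBA : Disjoint B A := by
    rw [hA, hB, Set.Ico_disjoint_Ico]
    norm_num
  have hdisj : Disjoint ((fun s => f₁ • s) '' B) ((fun s => f₁ • s) '' A) :=
    (Set.disjoint_image_iff (MulAction.injective f₁)).mpr hdisjBA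
  have h14B : (1/4 : ℝ) ∈ B := by rw [hB]; constructor <;> norm_num
  have h14fB : (1/4 : ℝ) ∈ (fun s => f₁ • s) '' B := hBsub h14B
  have h14fA : (1/4 : ℝ) ∈ (fun s => f₁ • s) '' A := by
    rw [h₁]; constructor <;> norm_num
  exact Set.disjoint_left.mp hdisj h14fB h14fA

open scoped commutatorElement

open SemidirectProduct in
theorem stmt11 {G T : Type*} [Group G] [Group T] [MulAction T ℝ]
    [IsSimpleGroup T] (f₁ f₂ : T)
    (h₁ : (fun s => f₁ • s) '' Set.Ico (1/2 : ℝ) 1 = Set.Ico (1/4 : ℝ) 1)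
    (h₂ : (fun s => f₂ • s) '' Set.Ico (1/2 : ℝ) 1 = Set.Ico (1/4 : ℝ) (1/2)) :
    let S : Subgroup ((ℝ → G) ⋊[wreathAct G T] T) :=
      Subgroup.closure
        ((Set.range fun g : G => (inl (gbar g) : (ℝ → G) ⋊[wreathAct G T] T)) ∪
          Set.range inr)
    ⁅S, S⁆ = S := by
  intro S
  have hmemG : ∀ g : G, (inl (gbar g) : (ℝ → G) ⋊[wreathAct G T] T) ∈ S := fun g =>
    Subgroup.subset_closure (Or.inl ⟨g, rfl⟩)
  have hmemT : ∀ t : T, (inr t : (ℝ → G) ⋊[wreathAct G T] T) ∈ S := fun t =>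
    Subgroup.subset_closure (Or.inr ⟨t, rfl⟩)
  apply le_antisymm
  · refine Subgroup.commutator_le.mpr fun a ha b hb => ?_
    exact mul_mem (mul_mem (mul_mem ha hb) (inv_mem ha)) (inv_mem hb)
  · refine (Subgroup.closure_le _).mpr ?_
    rintro x (⟨g, rfl⟩ | ⟨t, rfl⟩)
    · -- the `inl (gbar g)` generators
      show (inl (gbar g) : (ℝ → G) ⋊[wreathAct G T] T) ∈ ⁅S, S⁆
      have key : (wreathAct G T) f₂ (gbar g)⁻¹ * (wreathAct G T) f₁ (gbar g) = gbar g := by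
        funext s
        have m1 : (f₁⁻¹ • s ∈ Set.Ico (1/2 : ℝ) 1) ↔ s ∈ Set.Ico (1/4 : ℝ) 1 := by
          rw [mem_image_smul_iff' f₁ s, h₁]
        have m2 : (f₂⁻¹ • s ∈ Set.Ico (1/2 : ℝ) 1) ↔ s ∈ Set.Ico (1/4 : ℝ) (1/2) := by
          rw [mem_image_smul_iff' f₂ s, h₂]
        show ((gbar g)⁻¹ (f₂⁻¹ • s)) * (gbar g (f₁⁻¹ • s)) = gbar g s
        rw [Pi.inv_apply]
        unfold gbar
        simp only [m1, m2, Set.mem_Ico]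
        rcases lt_or_ge s (1/4 : ℝ) with h4 | h4
        · rw [if_neg (fun h => absurd h.1 (not_le.mpr h4)),
            if_neg (fun h => absurd h.1 (not_le.mpr h4)),
            if_neg (fun h => absurd h.1 (by push_neg; linarith))]
          simp
        rcases lt_or_ge s (1/2 : ℝ) with h2 | h2
        · rw [if_pos ⟨h4, h2⟩, if_pos ⟨h4, by linarith⟩,
            if_neg (fun h => absurd h.1 (not_le.mpr h2))]
          simp
        rcases lt_or_ge s 1 with hone | hone
        · rw [if_neg (fun h => absurd h.2 (not_lt.mpr h2)), if_pos ⟨h4, hone⟩,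
            if_pos ⟨h2, hone⟩]
          simp
        · rw [if_neg (fun h => absurd h.2 (not_lt.mpr h2)),
            if_neg (fun h => absurd h.2 (not_lt.mpr hone)),
            if_neg (fun h => absurd h.2 (not_lt.mpr hone))]
          simp
      have rel : (inr f₂ * (inl (gbar g))⁻¹ * (inr f₂)⁻¹) *
          (inr f₁ * inl (gbar g) * (inr f₁)⁻¹) =
          (inl (gbar g) : (ℝ → G) ⋊[wreathAct G T] T) := by
        simp only [← map_inv]
        rw [← inl_aut, ← inl_aut, ← map_mul, key]
      have hcomm : ⁅(inr f₂ : (ℝ → G) ⋊[wreathAct G T] T), (inl (gbar g))⁻¹⁆ *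
          ⁅((inl (gbar g))⁻¹ : (ℝ → G) ⋊[wreathAct G T] T), inr f₁⁆ =
          (inl (gbar g) : (ℝ → G) ⋊[wreathAct G T] T) := by
        rw [commutatorElement_def, commutatorElement_def]
        calc inr f₂ * (inl (gbar g))⁻¹ * (inr f₂)⁻¹ * ((inl (gbar g))⁻¹)⁻¹ *
              ((inl (gbar g))⁻¹ * inr f₁ * ((inl (gbar g))⁻¹)⁻¹ * (inr f₁)⁻¹) =
            inr f₂ * (inl (gbar g))⁻¹ * (inr f₂)⁻¹ *
              (inr f₁ * inl (gbar g) * (inr f₁)⁻¹) := by group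
        _ = _ := rel
      rw [← hcomm]
      exact mul_mem
        (Subgroup.commutator_mem_commutator (hmemT f₂) (inv_mem (hmemG g)))
        (Subgroup.commutator_mem_commutator (inv_mem (hmemG g)) (hmemT f₁))
    · -- the `inr t` generators
      show (inr t : (ℝ → G) ⋊[wreathAct G T] T) ∈ ⁅S, S⁆
      have hT : ⁅(⊤ : Subgroup T), (⊤ : Subgroup T)⁆ = ⊤ := by
        rcases (Subgroup.commutator_normal (⊤ : Subgroup T) ⊤).eq_bot_or_eq_top with h | h
        · exfalso
          apply noncomm' f₁ f₂ h₁ h₂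
          have hm : ⁅f₁, f₂⁆ ∈ ⁅(⊤ : Subgroup T), (⊤ : Subgroup T)⁆ :=
            Subgroup.commutator_mem_commutator trivial trivial
          rw [h, Subgroup.mem_bot] at hm
          exact commutatorElement_eq_one_iff_commute.mp hm
        · exact h
      have hmap : Subgroup.map (inr : T →* (ℝ → G) ⋊[wreathAct G T] T)
          ⁅(⊤ : Subgroup T), (⊤ : Subgroup T)⁆ ≤ ⁅S, S⁆ := by
        rw [Subgroup.map_commutator]
        refine Subgroup.commutator_mono ?_ ?_ <;>
          · rintro y ⟨u, -, rfl⟩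
            exact hmemT u
      exact hmap ⟨t, by rw [hT]; trivial, rfl⟩
end

section
/- The map g ↦ ḡ from G into the permutational wreath product C₀(ℝ, G) ⋊ T is a Frattini embedding: if ḡ and h̄ are conjugate in the wreath product, then g and h are conjugate in G. -/
open SemidirectProduct in
theorem stmt12 {G T : Type*} [Group G] [Group T] [MulAction T ℝ] (g h : G)
    (hc : IsConj (inl (gbar g) : (ℝ → G) ⋊[wreathAct G T] T)
        (inl (gbar h) : (ℝ → G) ⋊[wreathAct G T] T)) :
    IsConj g h := by
  obtain ⟨c, hsc⟩ := hc
  have hleft := congrArg SemidirectProduct.left hsc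
  simp only [mul_left, left_inl, right_inl, map_one, MulAut.one_apply] at hleft
  have key : ∀ s : ℝ, (↑c : (ℝ → G) ⋊[wreathAct G T] T).left s * gbar g ((↑c : (ℝ → G) ⋊[wreathAct G T] T).right⁻¹ • s) = gbar h s * (↑c : (ℝ → G) ⋊[wreathAct G T] T).left s := by
    intro s
    exact congrFun hleft s
  have hmem : (1/2 : ℝ) ∈ Set.Ico (1/2 : ℝ) 1 := by constructor <;> norm_num
  have h0 := key ((↑c : (ℝ → G) ⋊[wreathAct G T] T).right • (1/2 : ℝ))
  rw [inv_smul_smul] at h0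
  simp only [gbar, if_pos hmem] at h0
  by_cases hs : (↑c : (ℝ → G) ⋊[wreathAct G T] T).right • (1/2 : ℝ) ∈ Set.Ico (1/2 : ℝ) 1
  · rw [if_pos hs] at h0
    rw [isConj_iff]
    refine ⟨(↑c : (ℝ → G) ⋊[wreathAct G T] T).left ((↑c : (ℝ → G) ⋊[wreathAct G T] T).right • (1/2 : ℝ)), ?_⟩
    rw [h0, mul_inv_cancel_right]
  · rw [if_neg hs, one_mul] at h0
    have hg1 : g = 1 := by
      have h2 : (↑c : (ℝ → G) ⋊[wreathAct G T] T).left ((↑c : (ℝ → G) ⋊[wreathAct G T] T).right • (1/2:ℝ)) * g = (↑c : (ℝ → G) ⋊[wreathAct G T] T).left ((↑c : (ℝ → G) ⋊[wreathAct G T] T).right • (1/2:ℝ)) * 1 := by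
        rw [mul_one]; exact h0
      exact mul_left_cancel h2
    have h1 := key (1/2 : ℝ)
    have hg0 : gbar g ((↑c : (ℝ → G) ⋊[wreathAct G T] T).right⁻¹ • (1/2:ℝ)) = 1 := by simp [gbar, hg1]
    rw [hg0, mul_one] at h1
    simp only [gbar, if_pos hmem] at h1
    have hh1 : h = 1 := by
      have := mul_right_cancel (a := h) (b := (↑c : (ℝ → G) ⋊[wreathAct G T] T).left (1/2:ℝ)) (c := 1)
        (by rw [one_mul]; exact h1.symm)
      exact this
    rw [hg1, hh1]
end

section
/- With I_k as above and I_k^r its right half [(2^k-1)/2^k + 1/2^{2k+1}, (2^k-1)/2^k + 1/2^{2k}), and s_n(x) = 2^{-n}x + (1-2^{-n}): for n > 0 and k > n, the image s_{-n}(I_k^r) is contained in the left half I_{k-n}^l of I_{k-n}; in particular s_{-n}(I_k^r) is disjoint from all the right halves I_j^r. -/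
private lemma a_eq (i : ℕ) : ((2:ℝ)^i - 1)/2^i = 1 - 1/2^i := by
  have : (2:ℝ)^i ≠ 0 := by positivity
  field_simp

private lemma inv_pow_le {i j : ℕ} (h : i ≤ j) : (1:ℝ)/2^j ≤ 1/2^i := by
  apply one_div_le_one_div_of_le (by positivity)
  exact pow_le_pow_right₀ (by norm_num) h

theorem stmt18 (n k : ℕ) (hn : 0 < n) (hk : n < k) :
    let a : ℕ → ℝ := fun j => (2 ^ j - 1) / 2 ^ j
    let Ir : ℕ → Set ℝ := fun j =>
      Set.Ico (a j + 1 / 2 ^ (2 * j + 1)) (a j + 1 / 2 ^ (2 * j))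
    let Il : ℕ → Set ℝ := fun j =>
      Set.Ico (a j) (a j + 1 / 2 ^ (2 * j + 1))
    ((fun x : ℝ => 2 ^ n * x + (1 - 2 ^ n)) '' Ir k ⊆ Il (k - n)) ∧
    (∀ j : ℕ, 1 ≤ j →
      Disjoint ((fun x : ℝ => 2 ^ n * x + (1 - 2 ^ n)) '' Ir k) (Ir j)) := by
  intro a Ir Il
  set m := k - n with hmdef
  have hm : 1 ≤ m := by omega
  have hk' : k = n + m := by omega
  have hA : (2:ℝ) ≤ 2^n := by
    calc (2:ℝ) = 2^1 := (pow_one 2).symm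
    _ ≤ 2^n := pow_le_pow_right₀ (by norm_num) hn
  have hB : (2:ℝ) ≤ 2^m := by
    calc (2:ℝ) = 2^1 := (pow_one 2).symm
    _ ≤ 2^m := pow_le_pow_right₀ (by norm_num) hm
  have hA0 : (0:ℝ) < 2^n := by positivity
  have hB0 : (0:ℝ) < 2^m := by positivity
  have hsubset : (fun x : ℝ => 2 ^ n * x + (1 - 2 ^ n)) '' Ir k ⊆ Il m := by
    rintro _ ⟨x, ⟨hx1, hx2⟩, rfl⟩
    simp only [a, Il, Set.mem_Ico, a_eq] at *
    rw [hk'] at hx1 hx2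
    have e1 : (2:ℝ)^(n+m) = 2^n * 2^m := pow_add 2 n m
    have e2 : (2:ℝ)^(2*(n+m)) = (2^n)^2 * (2^m)^2 := by
      rw [two_mul, pow_add, pow_add]; ring
    have e3 : (2:ℝ)^(2*(n+m)+1) = 2 * ((2^n)^2 * (2^m)^2) := by
      rw [pow_succ, e2]; ring
    have e4 : (2:ℝ)^(2*m+1) = 2 * (2^m)^2 := by
      rw [pow_succ, two_mul, pow_add]; ring
    rw [e1, e3] at hx1
    rw [e1, e2] at hx2
    rw [e4]
    constructor
    · rw [sub_le_iff_le_add]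
      have h1 : 2^n * (1 - 1 / (2^n * 2^m) + 1 / (2 * ((2^n)^2 * (2^m)^2))) ≤ 2^n * x :=
        mul_le_mul_of_nonneg_left hx1 (le_of_lt hA0)
      have h2 : 2^n - 1/(2^m:ℝ) ≤ 2^n * (1 - 1 / (2^n * 2^m) + 1 / (2 * ((2^n)^2 * (2^m)^2))) := by
        have : 2^n * (1 - 1 / (2^n * 2^m) + 1 / (2 * ((2^n)^2 * (2^m)^2)))
            = 2^n - 1/(2^m:ℝ) + 1/(2*2^n*(2^m)^2) := by
          field_simp
        rw [this]
        have : (0:ℝ) ≤ 1/(2*2^n*(2^m)^2) := by positivity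
        linarith
      linarith
    · have h1 : 2^n * x < 2^n * (1 - 1 / (2^n * 2^m) + 1 / ((2^n)^2 * (2^m)^2)) :=
        mul_lt_mul_of_pos_left hx2 hA0
      have h2 : 2^n * (1 - 1 / (2^n * 2^m) + 1 / ((2^n)^2 * (2^m)^2))
          ≤ 2^n + (1 - 1/(2^m:ℝ) + 1 / (2 * (2^m)^2)) - 1 := by
        have e : 2^n * (1 - 1 / (2^n * 2^m) + 1 / ((2^n)^2 * (2^m)^2))
            = 2^n - 1/(2^m:ℝ) + 1/(2^n*(2^m)^2) := by
          field_simp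
        rw [e]
        have : 1/((2:ℝ)^n*(2^m)^2) ≤ 1 / (2 * (2^m)^2) := by
          apply one_div_le_one_div_of_le (by positivity)
          exact mul_le_mul_of_nonneg_right hA (by positivity)
        linarith
      linarith
  constructor
  · exact hsubset
  · intro j hj
    refine Set.disjoint_left.mpr ?_ |>.mono_left hsubset
    intro x hx hx'
    simp only [a, Il, Ir, Set.mem_Ico, a_eq] at hx hx'
    rcases lt_trichotomy j m with h | h | h
    · -- Ir j is entirely below a m
      have key : 1 - 1/(2:ℝ)^j + 1/2^(2*j) ≤ 1 - 1/2^m := by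
        have h1 : (1:ℝ)/2^(2*j) ≤ 1/2^(j+1) := inv_pow_le (by omega)
        have h2 : (1:ℝ)/2^m ≤ 1/2^(j+1) := inv_pow_le (by omega)
        have h3 : (1:ℝ)/2^(j+1) + 1/2^(j+1) = 1/2^j := by
          rw [pow_succ]; field_simp; ring
        linarith
      linarith [hx.1, hx'.2]
    · subst h; linarith [hx.2, hx'.1]
    · -- Il m is entirely below a j
      have key : 1 - 1/(2:ℝ)^m + 1/2^(2*m+1) ≤ 1 - 1/2^j := by
        have h1 : (1:ℝ)/2^(2*m+1) ≤ 1/2^(m+1) := inv_pow_le (by omega)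
        have h2 : (1:ℝ)/2^j ≤ 1/2^(m+1) := inv_pow_le (by omega)
        have h3 : (1:ℝ)/2^(m+1) + 1/2^(m+1) = 1/2^m := by
          rw [pow_succ]; field_simp; ring
        linarith
      have : (0:ℝ) < 1/2^(2*j+1) := by positivity
      linarith [hx.2, hx'.1]
end
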